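/- arXiv:2501.15859 — 3 statements merged into one kernel-verified Lean document; each statement's English description precedes it below -/
import Mathlib

section
/- The center of W_{p,q} equals F[ω], the F-subalgebra of W_{p,q} generated by the element ω = a·b⋆ + b·a⋆. -/
open Polynomial

noncomputable section

variable {F : Type*} [Field F]

/-- The defining relation of the free Hamilton algebra `W_{p,q}`: we identify `p(a)` and `q(b)`
with `0`, where `a` and `b` are the two generators of the free algebra. -/
def hamRel (p q : F[X]) : FreeAlgebra F (Fin 2) → FreeAlgebra F (Fin 2) → Prop :=
  fun x y =>
    (x = Polynomial.aeval (FreeAlgebra.ι F (0 : Fin 2)) p ∧ y = 0) ∨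
    (x = Polynomial.aeval (FreeAlgebra.ι F (1 : Fin 2)) q ∧ y = 0)

/-- The free Hamilton algebra `W_{p,q}`: the quotient of the free associative unital `F`-algebra
on two generators by the two-sided ideal generated by `p(a)` and `q(b)`. -/
abbrev HamAlg (p q : F[X]) : Type _ := RingQuot (hamRel p q)

/-- The coset `a` of the first generator. -/
def genA (p q : F[X]) : HamAlg p q :=
  RingQuot.mkAlgHom F (hamRel p q) (FreeAlgebra.ι F 0)

/-- The coset `b` of the second generator. -/
def genB (p q : F[X]) : HamAlg p q :=
  RingQuot.mkAlgHom F (hamRel p q) (FreeAlgebra.ι F 1)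

lemma monic2 {p : F[X]} (hp : p.Monic) (hpd : p.natDegree = 2) :
    p = X ^ 2 + C (p.coeff 1) * X + C (p.coeff 0) := by
  have h2 : p.coeff 2 = 1 := by
    have := hp.coeff_natDegree; rwa [hpd] at this
  ext n
  match n with
  | 0 => simp
  | 1 => simp
  | 2 => simp [h2, coeff_X_pow]
  | (n+3) =>
    rw [coeff_eq_zero_of_natDegree_lt (by omega : p.natDegree < n+3)]
    simp [coeff_X_pow, coeff_C]

lemma aeval_genA (p q : F[X]) : aeval (genA p q) p = 0 := by
  have h : hamRel p q (aeval (FreeAlgebra.ι F (0 : Fin 2)) p) 0 := Or.inl ⟨rfl, rfl⟩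
  have h2 := RingQuot.mkAlgHom_rel F h
  rw [map_zero] at h2
  rw [genA, aeval_algHom_apply, h2]

lemma aeval_genB (p q : F[X]) : aeval (genB p q) q = 0 := by
  have h : hamRel p q (aeval (FreeAlgebra.ι F (1 : Fin 2)) q) 0 := Or.inr ⟨rfl, rfl⟩
  have h2 := RingQuot.mkAlgHom_rel F h
  rw [map_zero] at h2
  rw [genB, aeval_algHom_apply, h2]

lemma genA_sq (p q : F[X]) (hp : p.Monic) (hpd : p.natDegree = 2) :
    genA p q * genA p q = (-(p.coeff 1)) • genA p q - (p.coeff 0) • 1 := by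
  have h : aeval (genA p q) (X ^ 2 + C (p.coeff 1) * X + C (p.coeff 0)) = 0 := by
    rw [← monic2 hp hpd]; exact aeval_genA p q
  simp only [map_add, map_mul, map_pow, aeval_X, aeval_C] at h
  rw [Algebra.smul_def, Algebra.smul_def, map_neg]
  rw [pow_two, add_assoc, add_eq_zero_iff_eq_neg] at h
  rw [h]
  simp [neg_add, neg_mul, sub_eq_add_neg, add_comm]
  exact (neg_mul ((algebraMap F (HamAlg p q)) (p.coeff 1)) (genA p q)).symm

lemma genB_sq (p q : F[X]) (hq : q.Monic) (hqd : q.natDegree = 2) :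
    genB p q * genB p q = (-(q.coeff 1)) • genB p q - (q.coeff 0) • 1 := by
  have h : aeval (genB p q) (X ^ 2 + C (q.coeff 1) * X + C (q.coeff 0)) = 0 := by
    rw [← monic2 hq hqd]; exact aeval_genB p q
  simp only [map_add, map_mul, map_pow, aeval_X, aeval_C] at h
  rw [Algebra.smul_def, Algebra.smul_def, map_neg]
  rw [pow_two, add_assoc, add_eq_zero_iff_eq_neg] at h
  rw [h]
  simp [neg_add, neg_mul, sub_eq_add_neg, add_comm]
  exact (neg_mul ((algebraMap F (HamAlg p q)) (q.coeff 1)) (genB p q)).symm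

/-- `ω = S•a + T•b - ab - ba` where `S = -q.coeff 1`, `T = -p.coeff 1`. -/
def omg (p q : F[X]) : HamAlg p q :=
  (-(q.coeff 1)) • genA p q + (-(p.coeff 1)) • genB p q
    - genA p q * genB p q - genB p q * genA p q

lemma omg_comm_genA (p q : F[X]) (hp : p.Monic) (hpd : p.natDegree = 2) :
    genA p q * omg p q = omg p q * genA p q := by
  have ha2 := genA_sq p q hp hpd
  simp only [omg, mul_sub, sub_mul, mul_add, add_mul, mul_smul_comm, smul_mul_assoc,
    ← mul_assoc]
  rw [mul_assoc (genB p q) (genA p q) (genA p q), ha2]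
  simp only [mul_sub, sub_mul, mul_add, add_mul, mul_smul_comm, smul_mul_assoc, smul_sub,
    smul_add, smul_smul, mul_one, one_mul]
  module

lemma omg_comm_genB (p q : F[X]) (hq : q.Monic) (hqd : q.natDegree = 2) :
    genB p q * omg p q = omg p q * genB p q := by
  have hb2 := genB_sq p q hq hqd
  simp only [omg, mul_sub, sub_mul, mul_add, add_mul, mul_smul_comm, smul_mul_assoc,
    ← mul_assoc]
  rw [mul_assoc (genA p q) (genB p q) (genB p q), hb2]
  simp only [mul_sub, sub_mul, mul_add, add_mul, mul_smul_comm, smul_mul_assoc, smul_sub,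
    smul_add, smul_smul, mul_one, one_mul]
  module

lemma adjoin_genAB (p q : F[X]) :
    Algebra.adjoin F {genA p q, genB p q} = ⊤ := by
  rw [eq_top_iff]
  rintro z -
  obtain ⟨w, rfl⟩ := RingQuot.mkAlgHom_surjective F (hamRel p q) z
  refine FreeAlgebra.induction F (Fin 2)
    (motive := fun w => RingQuot.mkAlgHom F (hamRel p q) w ∈ Algebra.adjoin F {genA p q, genB p q})
    ?_ ?_ ?_ ?_ w
  · intro r
    rw [AlgHom.commutes]
    exact Subalgebra.algebraMap_mem _ r
  · intro x
    fin_cases x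
    · exact Algebra.subset_adjoin (by left; rfl)
    · exact Algebra.subset_adjoin (by right; rfl)
  · intro x y hx hy
    rw [map_mul]
    exact mul_mem hx hy
  · intro x y hx hy
    rw [map_add]
    exact add_mem hx hy

lemma omg_central (p q : F[X]) (hp : p.Monic) (hpd : p.natDegree = 2)
    (hq : q.Monic) (hqd : q.natDegree = 2) :
    omg p q ∈ Subalgebra.center F (HamAlg p q) := by
  rw [Subalgebra.mem_center_iff]
  intro z
  have hz : z ∈ Algebra.adjoin F {genA p q, genB p q} := by
    rw [adjoin_genAB]; trivial
  refine Algebra.adjoin_induction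
    (p := fun x _ => x * omg p q = omg p q * x) ?_ ?_ ?_ ?_ hz
  · intro x hx
    rcases hx with h | h
    · rw [h]; exact omg_comm_genA p q hp hpd
    · rw [h]; exact omg_comm_genB p q hq hqd
  · intro r
    rw [Algebra.commutes]
  · intro x y _ _ hx hy
    rw [add_mul, mul_add, hx, hy]
  · intro x y _ _ hx hy
    rw [mul_assoc, hy, ← mul_assoc, hx, mul_assoc]


section Span

variable (p q : F[X])

lemma aeval_omg_central (p q : F[X]) (hp : p.Monic) (hpd : p.natDegree = 2)
    (hq : q.Monic) (hqd : q.natDegree = 2) (f : F[X]) (x : HamAlg p q) :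
    x * aeval (omg p q) f = aeval (omg p q) f * x := by
  have h1 : Algebra.adjoin F {omg p q} ≤ Subalgebra.center F (HamAlg p q) := by
    apply Algebra.adjoin_le
    exact Set.singleton_subset_iff.mpr (omg_central p q hp hpd hq hqd)
  have h2 : aeval (omg p q) f ∈ Algebra.adjoin F {omg p q} := by
    rw [Algebra.adjoin_singleton_eq_range_aeval]
    exact ⟨f, rfl⟩
  exact Subalgebra.mem_center_iff.mp (h1 h2) x

set_option maxHeartbeats 1000000 in
lemma span_ham (hp : p.Monic) (hpd : p.natDegree = 2)
    (hq : q.Monic) (hqd : q.natDegree = 2) (z : HamAlg p q) :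
    ∃ f g h k : F[X],
      z = aeval (omg p q) f + aeval (omg p q) g * genA p q
        + aeval (omg p q) h * genB p q
        + aeval (omg p q) k * (genA p q * genB p q) := by
  set a := genA p q with ha
  set b := genB p q with hb
  set ω := omg p q with hω
  have hcent : ∀ (f : F[X]) (x : HamAlg p q), x * aeval ω f = aeval ω f * x :=
    aeval_omg_central p q hp hpd hq hqd
  have ha2 := genA_sq p q hp hpd
  have hb2 := genB_sq p q hq hqd
  rw [← ha] at ha2
  rw [← hb] at hb2
  have hba : b * a = (-(q.coeff 1)) • a + (-(p.coeff 1)) • b - ω - a * b := by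
    rw [hω, omg]; abel
  have haab : a * (a * b) = (-(p.coeff 1)) • (a * b) - (p.coeff 0) • b := by
    rw [← mul_assoc, ha2]
    simp only [sub_mul, smul_mul_assoc, smul_eq_mul, one_mul]
  have hbab : b * (a * b) = (q.coeff 0) • a + ((-(p.coeff 1)) * (-(q.coeff 1))) • b
      - ω * b - ((-(p.coeff 1)) * (q.coeff 0)) • (1 : HamAlg p q) := by
    rw [← mul_assoc, hba]
    simp only [sub_mul, add_mul, smul_mul_assoc, mul_assoc]
    rw [hb2]
    simp only [mul_sub, sub_mul, mul_add, add_mul, mul_smul_comm, smul_mul_assoc, smul_sub,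
      smul_add, smul_smul, mul_one, one_mul]
    module
  -- the key closure property
  have key : ∀ z : HamAlg p q, z ∈ Algebra.adjoin F {a, b} →
      ∀ f g h k : F[X], ∃ f' g' h' k' : F[X],
        z * (aeval ω f + aeval ω g * a + aeval ω h * b + aeval ω k * (a * b))
          = aeval ω f' + aeval ω g' * a + aeval ω h' * b + aeval ω k' * (a * b) := by
    intro z hz
    refine Algebra.adjoin_induction
      (p := fun x _ => ∀ f g h k : F[X], ∃ f' g' h' k' : F[X],
        x * (aeval ω f + aeval ω g * a + aeval ω h * b + aeval ω k * (a * b))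
          = aeval ω f' + aeval ω g' * a + aeval ω h' * b + aeval ω k' * (a * b)) ?_ ?_ ?_ ?_ hz
    · intro x hx
      rcases hx with h | h
      · -- x = a
        subst h
        intro f g h k
        refine ⟨C (-(p.coeff 0)) * g, f + C (-(p.coeff 1)) * g,
          C (-(p.coeff 0)) * k, h + C (-(p.coeff 1)) * k, ?_⟩
        rw [mul_add, mul_add, mul_add, hcent f a,
          ← mul_assoc a (aeval ω g) a, hcent g a, mul_assoc (aeval ω g) a a, ha2,
          ← mul_assoc a (aeval ω h) b, hcent h a, mul_assoc (aeval ω h) a b,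
          ← mul_assoc a (aeval ω k) (a * b), hcent k a, mul_assoc (aeval ω k) a (a * b), haab]
        simp only [map_add, map_mul, aeval_C, aeval_X, ← Algebra.smul_def]
        simp only [mul_add, add_mul, mul_sub, sub_mul, smul_mul_assoc, mul_smul_comm,
          smul_smul, smul_sub, smul_add, mul_one, one_mul, ← Algebra.smul_def,
          ← mul_assoc]
        module
      · -- x = b
        subst h
        intro f g h k
        refine ⟨C (-1 : F) * (g * X) + C (-(q.coeff 0)) * h + C (p.coeff 1 * q.coeff 0) * k,
          C (-(q.coeff 1)) * g + C (q.coeff 0) * k,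
          f + C (-(p.coeff 1)) * g + C (-(q.coeff 1)) * h
            + C (p.coeff 1 * q.coeff 1) * k + C (-1 : F) * (k * X),
          C (-1 : F) * g, ?_⟩
        rw [mul_add, mul_add, mul_add, hcent f b,
          ← mul_assoc b (aeval ω g) a, hcent g b, mul_assoc (aeval ω g) b a, hba,
          ← mul_assoc b (aeval ω h) b, hcent h b, mul_assoc (aeval ω h) b b, hb2,
          ← mul_assoc b (aeval ω k) (a * b), hcent k b, mul_assoc (aeval ω k) b (a * b), hbab]
        simp only [map_add, map_mul, aeval_C, aeval_X, ← Algebra.smul_def]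
        simp only [mul_add, add_mul, mul_sub, sub_mul, smul_mul_assoc, mul_smul_comm,
          smul_smul, smul_sub, smul_add, mul_one, one_mul, ← Algebra.smul_def,
          ← mul_assoc]
        module
    · intro r f g h k
      refine ⟨C r * f, C r * g, C r * h, C r * k, ?_⟩
      simp only [map_mul, aeval_C, mul_add, ← mul_assoc]
    · intro x y _ _ hx hy f g h k
      obtain ⟨f1, g1, h1, k1, e1⟩ := hx f g h k
      obtain ⟨f2, g2, h2, k2, e2⟩ := hy f g h k
      refine ⟨f1 + f2, g1 + g2, h1 + h2, k1 + k2, ?_⟩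
      rw [add_mul, e1, e2]
      simp only [map_add, add_mul]
      abel
    · intro x y _ _ hx hy f g h k
      obtain ⟨f1, g1, h1, k1, e1⟩ := hy f g h k
      obtain ⟨f2, g2, h2, k2, e2⟩ := hx f1 g1 h1 k1
      exact ⟨f2, g2, h2, k2, by rw [mul_assoc, e1, e2]⟩
  have hz : z ∈ Algebra.adjoin F {a, b} := by
    rw [ha, hb, adjoin_genAB]; trivial
  obtain ⟨f', g', h', k', e⟩ := key z hz 1 0 0 0
  refine ⟨f', g', h', k', ?_⟩
  simpa using e

end Span

section MatrixSide

def matA (p : F[X]) : Matrix (Fin 2) (Fin 2) F[X] :=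
  !![0, -C (p.coeff 0); 1, -C (p.coeff 1)]

def matB (q : F[X]) : Matrix (Fin 2) (Fin 2) F[X] :=
  !![X, -C (q.coeff 1) * X - X ^ 2 - C (q.coeff 0); 1, -C (q.coeff 1) - X]

lemma aeval_matA (p : F[X]) (hp : p.Monic) (hpd : p.natDegree = 2) :
    aeval (matA p) p = 0 := by
  have e := congrArg (aeval (matA p)) (monic2 hp hpd)
  rw [e]
  simp only [map_add, map_mul, map_pow, aeval_X, aeval_C]
  apply Matrix.ext_iff.mp
  intro i j
  fin_cases i <;> fin_cases j <;>
    simp [matA, pow_two, Matrix.mul_apply, Fin.sum_univ_two,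
      Matrix.algebraMap_matrix_apply, Polynomial.algebraMap_eq] <;> ring

lemma aeval_matB (q : F[X]) (hq : q.Monic) (hqd : q.natDegree = 2) :
    aeval (matB q) q = 0 := by
  have e := congrArg (aeval (matB q)) (monic2 hq hqd)
  rw [e]
  simp only [map_add, map_mul, map_pow, aeval_X, aeval_C]
  apply Matrix.ext_iff.mp
  intro i j
  fin_cases i <;> fin_cases j <;>
    simp [matB, pow_two, Matrix.mul_apply, Fin.sum_univ_two,
      Matrix.algebraMap_matrix_apply, Polynomial.algebraMap_eq] <;> ring

def rho (p q : F[X]) (h1 : aeval (matA p) p = 0) (h2 : aeval (matB q) q = 0) :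
    HamAlg p q →ₐ[F] Matrix (Fin 2) (Fin 2) F[X] :=
  RingQuot.liftAlgHom F ⟨FreeAlgebra.lift F ![matA p, matB q], by
    rintro x y (⟨rfl, rfl⟩ | ⟨rfl, rfl⟩)
    · rw [map_zero, ← aeval_algHom_apply, FreeAlgebra.lift_ι_apply]
      simpa using h1
    · rw [map_zero, ← aeval_algHom_apply, FreeAlgebra.lift_ι_apply]
      simpa using h2⟩

lemma rho_genA (p q : F[X]) (h1 : aeval (matA p) p = 0) (h2 : aeval (matB q) q = 0) :
    rho p q h1 h2 (genA p q) = matA p := by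
  rw [genA, rho, RingQuot.liftAlgHom_mkAlgHom_apply]
  rw [FreeAlgebra.lift_ι_apply]
  rfl

lemma rho_genB (p q : F[X]) (h1 : aeval (matA p) p = 0) (h2 : aeval (matB q) q = 0) :
    rho p q h1 h2 (genB p q) = matB q := by
  rw [genB, rho, RingQuot.liftAlgHom_mkAlgHom_apply]
  rw [FreeAlgebra.lift_ι_apply]
  rfl

/-- The scalar by which ω acts in the matrix representation. -/
def lam (p q : F[X]) : F[X] :=
  X ^ 2 + C (q.coeff 1 - p.coeff 1) * X + C (p.coeff 0 + q.coeff 0)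

set_option maxHeartbeats 800000 in
lemma rho_omg (p q : F[X]) (h1 : aeval (matA p) p = 0) (h2 : aeval (matB q) q = 0) :
    rho p q h1 h2 (omg p q) = algebraMap F[X] (Matrix (Fin 2) (Fin 2) F[X]) (lam p q) := by
  rw [omg]
  simp only [map_add, map_sub, map_mul, map_smul, rho_genA, rho_genB]
  apply Matrix.ext_iff.mp
  intro i j
  fin_cases i <;> fin_cases j <;>
    simp [matA, matB, lam, Matrix.mul_apply, Fin.sum_univ_two, Matrix.add_apply,
      Matrix.sub_apply, Matrix.smul_apply, Polynomial.smul_eq_C_mul, map_add, map_sub,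
      Matrix.algebraMap_matrix_apply, Polynomial.algebraMap_eq] <;> ring

end MatrixSide

section KeyMatrix

def polyP (p q : F[X]) : F[X] := X ^ 2 + C (q.coeff 1) * X + C (q.coeff 0 - p.coeff 0)

def polyPt (p q : F[X]) : F[X] := (polyP p q).comp (X + C (-(p.coeff 1)))

def polyQ (p q : F[X]) : F[X] :=
  polyP p q * polyPt p q + C (p.coeff 0) * (2 * X + C (q.coeff 1 - p.coeff 1)) ^ 2

lemma polyP_monic (p q : F[X]) : (polyP p q).Monic := by unfold polyP; monicity!

lemma polyP_natDegree (p q : F[X]) : (polyP p q).natDegree = 2 := by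
  unfold polyP; compute_degree!

lemma polyPt_monic (p q : F[X]) : (polyPt p q).Monic :=
  (polyP_monic p q).comp_X_add_C _

lemma polyQ_ne_zero (p q : F[X]) : polyQ p q ≠ 0 := by
  intro h0
  have hPm := polyP_monic p q
  have hPtm := polyPt_monic p q
  have h1 : polyP p q * polyPt p q
      = -(C (p.coeff 0) * (2 * X + C (q.coeff 1 - p.coeff 1)) ^ 2) := by
    rw [polyQ] at h0; linear_combination h0
  have h2 : (polyP p q * polyPt p q).natDegree = 4 := by
    rw [hPm.natDegree_mul hPtm, polyP_natDegree, polyPt, natDegree_comp, polyP_natDegree,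
      natDegree_X_add_C]
  have h3 : (-(C (p.coeff 0) * (2 * X + C (q.coeff 1 - p.coeff 1)) ^ 2)).natDegree ≤ 2 := by
    rw [natDegree_neg]
    compute_degree
  rw [h1] at h2
  rw [h2] at h3
  omega

set_option maxHeartbeats 1600000 in
lemma key_matrix (p q : F[X]) (α β γ δ : F[X])
    (hA : (α • (1 : Matrix (Fin 2) (Fin 2) F[X]) + β • matA p + γ • matB q
        + δ • (matA p * matB q)) * matA p
      = matA p * (α • (1 : Matrix (Fin 2) (Fin 2) F[X]) + β • matA p + γ • matB q
        + δ • (matA p * matB q)))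
    (hB : (α • (1 : Matrix (Fin 2) (Fin 2) F[X]) + β • matA p + γ • matB q
        + δ • (matA p * matB q)) * matB q
      = matB q * (α • (1 : Matrix (Fin 2) (Fin 2) F[X]) + β • matA p + γ • matB q
        + δ • (matA p * matB q))) :
    β = 0 ∧ γ = 0 ∧ δ = 0 := by
  rw [← Matrix.ext_iff] at hA hB
  have e1 := hA 0 0
  have e3 := hA 1 0
  have e2 := hB 0 0
  simp [matA, matB, Matrix.mul_apply, Fin.sum_univ_two] at e1 e2 e3
  have hPeq : polyP p q = X ^ 2 + C (q.coeff 1) * X + C (q.coeff 0) - C (p.coeff 0) := by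
    rw [polyP, map_sub]; ring
  have hPne : (X ^ 2 + C (q.coeff 1) * X + C (q.coeff 0) - C (p.coeff 0) : F[X]) ≠ 0 :=
    hPeq ▸ (polyP_monic p q).ne_zero
  have S1 : (X ^ 2 + C (q.coeff 1) * X + C (q.coeff 0) - C (p.coeff 0))
      * (β + γ + δ * (X - C (p.coeff 1))) = 0 := by
    linear_combination e2 - e1
  have S2 : β + γ + δ * (X - C (p.coeff 1)) = 0 :=
    ((mul_eq_zero.mp S1).resolve_left hPne)
  have hQeq : polyQ p q = (X ^ 2 + C (q.coeff 1) * X + C (q.coeff 0) - C (p.coeff 0)) *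
      (X ^ 2 - 2 * C (p.coeff 1) * X + C (p.coeff 1) ^ 2 + C (q.coeff 1) * X
        - C (q.coeff 1) * C (p.coeff 1) + C (q.coeff 0) - C (p.coeff 0))
      + C (p.coeff 0) * (2 * X + C (q.coeff 1) - C (p.coeff 1)) ^ 2 := by
    simp only [polyQ, polyPt, polyP, add_comp, sub_comp, mul_comp, X_comp, C_comp, pow_comp,
      map_sub, map_neg]
    ring
  have S7 : δ * ((X ^ 2 + C (q.coeff 1) * X + C (q.coeff 0) - C (p.coeff 0)) *
      (X ^ 2 - 2 * C (p.coeff 1) * X + C (p.coeff 1) ^ 2 + C (q.coeff 1) * X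
        - C (q.coeff 1) * C (p.coeff 1) + C (q.coeff 0) - C (p.coeff 0))
      + C (p.coeff 0) * (2 * X + C (q.coeff 1) - C (p.coeff 1)) ^ 2) = 0 := by
    linear_combination (2 * X + C (q.coeff 1) - C (p.coeff 1)) * e1
      - (X ^ 2 + C (q.coeff 1) * X + C (q.coeff 0) - C (p.coeff 0)) * e3
  have S8 : δ = 0 := by
    rcases mul_eq_zero.mp S7 with h | h
    · exact h
    · exact absurd h (hQeq ▸ polyQ_ne_zero p q)
  have S9 : γ * (X ^ 2 + C (q.coeff 1) * X + C (q.coeff 0) - C (p.coeff 0)) = 0 := by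
    linear_combination -e1 + C (p.coeff 0) * (2 * X + C (q.coeff 1) - C (p.coeff 1)) * S8
  have S10 : γ = 0 := ((mul_eq_zero.mp S9).resolve_right hPne)
  have S11 : β = 0 := by
    linear_combination S2 - S10 - (X - C (p.coeff 1)) * S8
  exact ⟨S11, S10, S8⟩

end KeyMatrix

lemma aeval_lam_zero (p q g : F[X]) (hg : aeval (lam p q) g = 0) : g = 0 := by
  have heq : g.comp (lam p q) = aeval (lam p q) g := by
    rw [Polynomial.comp, Polynomial.aeval_def, Polynomial.algebraMap_eq]
  have h0 : g.comp (lam p q) = 0 := by rw [heq, hg]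
  rcases Polynomial.comp_eq_zero_iff.mp h0 with h | ⟨-, h⟩
  · exact h
  · exfalso
    have hd : (lam p q).natDegree = 2 := by unfold lam; compute_degree!
    rw [h] at hd
    simp [natDegree_C] at hd

/-- `σ` is the adjunction of `W_{p,q}`: the unique `F`-linear antiautomorphism with
`a⋆ = tr(p)·1 − a` and `b⋆ = tr(q)·1 − b`, where `tr(p) = -(coeff of t in p)`.
It is involutive. -/
def IsAdjunction (p q : F[X]) (σ : HamAlg p q → HamAlg p q) : Prop :=
  (∀ x y, σ (x + y) = σ x + σ y) ∧
  (∀ (c : F) (x : HamAlg p q), σ (c • x) = c • σ x) ∧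
  (∀ x y, σ (x * y) = σ y * σ x) ∧
  σ 1 = 1 ∧
  (∀ x, σ (σ x) = x) ∧
  σ (genA p q) = algebraMap F (HamAlg p q) (-(p.coeff 1)) - genA p q ∧
  σ (genB p q) = algebraMap F (HamAlg p q) (-(q.coeff 1)) - genB p q

/-- The center of `W_{p,q}` is `F[ω]` where `ω = a·b⋆ + b·a⋆`. -/
theorem statement12 (p q : F[X]) (hp : p.Monic) (hpd : p.natDegree = 2)
    (hq : q.Monic) (hqd : q.natDegree = 2)
    (σ : HamAlg p q → HamAlg p q) (hσ : IsAdjunction p q σ) :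
    Subalgebra.center F (HamAlg p q) =
      Algebra.adjoin F {genA p q * σ (genB p q) + genB p q * σ (genA p q)} := by
  obtain ⟨-, -, -, -, -, h6, h7⟩ := hσ
  have hsig : genA p q * σ (genB p q) + genB p q * σ (genA p q) = omg p q := by
    rw [h6, h7, omg]
    simp only [mul_sub, ← Algebra.commutes, ← Algebra.smul_def]
    abel
  rw [hsig]
  have h1 := aeval_matA p hp hpd
  have h2 := aeval_matB q hq hqd
  apply le_antisymm
  · intro z hz
    obtain ⟨f, g, h, k, hdec⟩ := span_ham p q hp hpd hq hqd z
    have hzc := Subalgebra.mem_center_iff.mp hz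
    have hZA : rho p q h1 h2 z * matA p = matA p * rho p q h1 h2 z := by
      have e := congrArg (rho p q h1 h2) (hzc (genA p q))
      rw [map_mul, map_mul, rho_genA] at e
      exact e.symm
    have hZB : rho p q h1 h2 z * matB q = matB q * rho p q h1 h2 z := by
      have e := congrArg (rho p q h1 h2) (hzc (genB p q))
      rw [map_mul, map_mul, rho_genB] at e
      exact e.symm
    have hρ : rho p q h1 h2 z
        = aeval (lam p q) f • (1 : Matrix (Fin 2) (Fin 2) F[X])
          + aeval (lam p q) g • matA p + aeval (lam p q) h • matB q
          + aeval (lam p q) k • (matA p * matB q) := by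
      rw [hdec]
      simp only [map_add, map_mul, rho_genA, rho_genB]
      rw [← aeval_algHom_apply, ← aeval_algHom_apply, ← aeval_algHom_apply,
        ← aeval_algHom_apply, rho_omg]
      rw [aeval_algebraMap_apply, aeval_algebraMap_apply, aeval_algebraMap_apply,
        aeval_algebraMap_apply]
      simp only [← Algebra.smul_def, Algebra.algebraMap_eq_smul_one, smul_mul_assoc, one_mul]
    rw [hρ] at hZA hZB
    obtain ⟨hg, hh, hk⟩ := key_matrix p q _ _ _ _ hZA hZB
    have hg0 : g = 0 := aeval_lam_zero p q g hg
    have hh0 : h = 0 := aeval_lam_zero p q h hh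
    have hk0 : k = 0 := aeval_lam_zero p q k hk
    rw [hdec, hg0, hh0, hk0]
    simp only [map_zero, zero_mul, add_zero]
    rw [Algebra.adjoin_singleton_eq_range_aeval]
    exact ⟨f, rfl⟩
  · apply Algebra.adjoin_le
    intro x hx
    rw [Set.mem_singleton_iff.mp hx]
    exact omg_central p q hp hpd hq hqd
end
end

section
/- Let x ∈ F[a] ∖ F·1 and y ∈ F[b] ∖ F·1, with minimal polynomials r and s over F (both monic of degree 2). Then the determinant of the 4×4 Gram matrix (⟨uᵢ,uⱼ⟩)₁≤i,j≤4, where (u₁,u₂,u₃,u₄) = (1, x, y, x·y), computed in the commutative ring F[ω], equals Λ_{r,s}(⟨x,y⟩)², where Λ_{r,s}(t) := t² − tr(r)·tr(s)·t − 4·N(r)·N(s) + tr(r)²·N(s) + tr(s)²·N(r) and Λ_{r,s}(⟨x,y⟩) denotes the evaluation of this polynomial at the central element ⟨x,y⟩. -/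
open Polynomial

noncomputable section

variable {F : Type*} [Field F]

private lemma aux_quad {A : Type*} [Ring A] [Algebra F A] {r : F[X]} (hr : r.Monic)
    (hrd : r.natDegree = 2) {z : A} (h : Polynomial.aeval z r = 0) :
    z * z = (-(r.coeff 1)) • z - (r.coeff 0) • (1 : A) := by
  rw [Polynomial.aeval_eq_sum_range, hrd, Finset.sum_range_succ, Finset.sum_range_succ,
    Finset.sum_range_one, pow_zero, pow_one] at h
  have h2 : r.coeff 2 = 1 := by have := hr.coeff_natDegree; rwa [hrd] at this
  rw [h2, one_smul] at h
  have h3 := eq_neg_of_add_eq_zero_right h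
  rw [← pow_two, h3]
  module

private lemma aux_mul {A : Type*} [Ring A] [Algebra F A] {g : A} {α β : F}
    (hg : g * g = α • g - β • (1:A)) (c d c' d' : F) :
    (c • (1:A) + d • g) * (c' • (1:A) + d' • g)
      = (c*c' - d*d'*β) • (1:A) + (c*d' + d*c' + d*d'*α) • g := by
  have e : (c • (1:A) + d • g) * (c' • (1:A) + d' • g)
      = (c*c') • (1:A) + (c*d' + d*c') • g + (d*d') • (g*g) := by
    noncomm_ring
    module
  rw [e, hg]
  module

private lemma aux_adjoin {A : Type*} [Ring A] [Algebra F A] {g : A} {α β : F}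
    (hg : g * g = α • g - β • (1:A)) {x : A} (hx : x ∈ Algebra.adjoin F {g}) :
    ∃ c d : F, x = c • (1:A) + d • g := by
  induction hx using Algebra.adjoin_induction with
  | mem z hz =>
      rcases Set.mem_singleton_iff.mp hz with rfl
      exact ⟨0, 1, by simp⟩
  | algebraMap r => exact ⟨r, 0, by simp [Algebra.algebraMap_eq_smul_one]⟩
  | add u v hu hv hu' hv' =>
      obtain ⟨c, d, rfl⟩ := hu'
      obtain ⟨c', d', rfl⟩ := hv'
      exact ⟨c + c', d + d', by module⟩
  | mul u v hu hv hu' hv' =>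
      obtain ⟨c, d, rfl⟩ := hu'
      obtain ⟨c', d', rfl⟩ := hv'
      exact ⟨c*c' - d*d'*β, c*d' + d*c' + d*d'*α, aux_mul hg c d c' d'⟩

private lemma aux_det {R : Type*} [CommRing R] (t u n m w : R) :
    Matrix.det !![1+1, t, u, t*u - w;
                  t, n+n, w, u*n;
                  u, w, m+m, t*m;
                  t*u - w, u*n, t*m, m*n+m*n]
      = (w^2 - t*u*w + ((t^2*m + u^2*n) - (n*m+n*m+n*m+n*m)))^2 := by
  simp [Matrix.det_succ_row_zero, Fin.sum_univ_succ, Fin.succAbove,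
    Fin.castSucc, Fin.castAdd, Fin.castLE, Matrix.cons_val_succ]
  ring

set_option maxHeartbeats 2000000
set_option synthInstance.maxHeartbeats 400000

/-- The Gram determinant of the inner product `⟨u,v⟩ = u·v⋆ + v·u⋆` on the deployed basis
`(1, x, y, xy)`, computed in the commutative ring `F[ω]` (the center), equals
`Λ_{r,s}(⟨x,y⟩)²`, where `r`, `s` are the minimal polynomials of `x ∈ F[a] ∖ F` and
`y ∈ F[b] ∖ F`, and `Λ_{r,s}(t) = t² − tr(r)tr(s)·t − 4N(r)N(s) + tr(r)²N(s) + tr(s)²N(r)`. -/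
theorem statement15 (p q : F[X]) (hp : p.Monic) (hpd : p.natDegree = 2)
    (hq : q.Monic) (hqd : q.natDegree = 2)
    (σ : HamAlg p q → HamAlg p q) (hσ : IsAdjunction p q σ)
    (x y : HamAlg p q)
    (hxA : x ∈ Algebra.adjoin F {genA p q}) (hx : x ∉ Set.range (algebraMap F (HamAlg p q)))
    (hyB : y ∈ Algebra.adjoin F {genB p q}) (hy : y ∉ Set.range (algebraMap F (HamAlg p q)))
    (r s : F[X]) (hr : r.Monic) (hrd : r.natDegree = 2) (hrx : Polynomial.aeval x r = 0)
    (hs : s.Monic) (hsd : s.natDegree = 2) (hsy : Polynomial.aeval y s = 0) :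
    ∃ M : Matrix (Fin 4) (Fin 4) ↥(Subalgebra.center F (HamAlg p q)),
      (∀ i j : Fin 4,
        (M i j : HamAlg p q) =
          (![1, x, y, x * y] i) * σ (![1, x, y, x * y] j) +
            (![1, x, y, x * y] j) * σ (![1, x, y, x * y] i)) ∧
      ((M.det : ↥(Subalgebra.center F (HamAlg p q))) : HamAlg p q) =
        ((x * σ y + y * σ x) ^ 2
          - algebraMap F (HamAlg p q) ((-(r.coeff 1)) * (-(s.coeff 1))) * (x * σ y + y * σ x)
          + algebraMap F (HamAlg p q)
              ((-(r.coeff 1)) ^ 2 * s.coeff 0 + (-(s.coeff 1)) ^ 2 * r.coeff 0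
                - 4 * r.coeff 0 * s.coeff 0)) ^ 2 := by
  obtain ⟨hadd, hsmul, hmul, hone, hinv, hA, hB⟩ := hσ
  -- p(a) = 0 and q(b) = 0 in the quotient
  have hpa : Polynomial.aeval (genA p q) p = 0 := by
    have h0 : hamRel p q (Polynomial.aeval (FreeAlgebra.ι F (0 : Fin 2)) p) 0 :=
      Or.inl ⟨rfl, rfl⟩
    have h1 := RingQuot.mkAlgHom_rel F h0
    rw [map_zero] at h1
    exact (Polynomial.aeval_algHom_apply _ _ _).trans h1
  have hqb : Polynomial.aeval (genB p q) q = 0 := by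
    have h0 : hamRel p q (Polynomial.aeval (FreeAlgebra.ι F (1 : Fin 2)) q) 0 :=
      Or.inr ⟨rfl, rfl⟩
    have h1 := RingQuot.mkAlgHom_rel F h0
    rw [map_zero] at h1
    exact (Polynomial.aeval_algHom_apply _ _ _).trans h1
  have ha2 := aux_quad hp hpd hpa
  have hb2 := aux_quad hq hqd hqb
  obtain ⟨c, d, hxcd⟩ := aux_adjoin ha2 hxA
  obtain ⟨e, f, hyef⟩ := aux_adjoin hb2 hyB
  have hd : d ≠ 0 := by
    rintro rfl
    exact hx ⟨c, by rw [hxcd]; simp [Algebra.algebraMap_eq_smul_one]⟩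
  have hf : f ≠ 0 := by
    rintro rfl
    exact hy ⟨e, by rw [hyef]; simp [Algebra.algebraMap_eq_smul_one]⟩
  set τ : F := 2*c + d*(-(p.coeff 1)) with hτ
  set ν : F := c^2 + c*d*(-(p.coeff 1)) + d^2*(p.coeff 0) with hν
  set υ : F := 2*e + f*(-(q.coeff 1)) with hυ
  set μ : F := e^2 + e*f*(-(q.coeff 1)) + f^2*(q.coeff 0) with hμ
  -- quadratic relations for x and y with scalar coefficients
  have hx2 : x * x = τ • x - ν • (1 : HamAlg p q) := by
    rw [hxcd, aux_mul ha2, hτ, hν]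
    match_scalars <;> ring
  have hy2 : y * y = υ • y - μ • (1 : HamAlg p q) := by
    rw [hyef, aux_mul hb2, hυ, hμ]
    match_scalars <;> ring
  -- σ on x and y
  have hσx : σ x = τ • (1 : HamAlg p q) - x := by
    rw [hxcd]
    have h1 : σ (c • (1 : HamAlg p q) + d • genA p q) = c • σ 1 + d • σ (genA p q) := by
      rw [hadd, hsmul, hsmul]
    rw [h1, hone, hA, Algebra.algebraMap_eq_smul_one, hτ]
    match_scalars <;> ring
  have hσy : σ y = υ • (1 : HamAlg p q) - y := by
    rw [hyef]
    have h1 : σ (e • (1 : HamAlg p q) + f • genB p q) = e • σ 1 + f • σ (genB p q) := by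
      rw [hadd, hsmul, hsmul]
    rw [h1, hone, hB, Algebra.algebraMap_eq_smul_one, hυ]
    match_scalars <;> ring
  have hxsx : x * σ x = ν • (1 : HamAlg p q) := by
    rw [hσx, mul_sub, mul_smul_comm, mul_one, hx2]; abel
  have hysy : y * σ y = μ • (1 : HamAlg p q) := by
    rw [hσy, mul_sub, mul_smul_comm, mul_one, hy2]; abel
  -- compare r with (τ, ν)
  have hxr := aux_quad hr hrd hrx
  have keyr : (τ - (-(r.coeff 1))) • x = (ν - r.coeff 0) • (1 : HamAlg p q) := by
    have h0 : τ • x - ν • (1 : HamAlg p q) = (-(r.coeff 1)) • x - (r.coeff 0) • 1 :=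
      hx2.symm.trans hxr
    have h1 : (τ - (-(r.coeff 1))) • x - (ν - r.coeff 0) • (1 : HamAlg p q)
        = (τ • x - ν • (1 : HamAlg p q)) - ((-(r.coeff 1)) • x - (r.coeff 0) • 1) := by
      module
    rw [h0, sub_self] at h1
    exact sub_eq_zero.mp h1
  have htr : -(r.coeff 1) = τ := by
    by_contra hne
    refine hx ⟨(τ - (-(r.coeff 1)))⁻¹ * (ν - r.coeff 0), ?_⟩
    rw [Algebra.algebraMap_eq_smul_one, mul_smul, ← keyr, smul_smul,
      inv_mul_cancel₀ (sub_ne_zero.mpr (fun hh => hne hh.symm)), one_smul]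
  have hr0 : algebraMap F (HamAlg p q) (r.coeff 0 - ν) = 0 := by
    have h1 : (ν - r.coeff 0) • (1 : HamAlg p q) = 0 := by
      rw [← keyr, htr, sub_self]
      module
    have h2 : (r.coeff 0 - ν) • (1 : HamAlg p q) = -((ν - r.coeff 0) • (1 : HamAlg p q)) := by
      module
    rw [Algebra.algebraMap_eq_smul_one, h2, h1, neg_zero]
  -- compare s with (υ, μ)
  have hys := aux_quad hs hsd hsy
  have keys : (υ - (-(s.coeff 1))) • y = (μ - s.coeff 0) • (1 : HamAlg p q) := by
    have h0 : υ • y - μ • (1 : HamAlg p q) = (-(s.coeff 1)) • y - (s.coeff 0) • 1 :=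
      hy2.symm.trans hys
    have h1 : (υ - (-(s.coeff 1))) • y - (μ - s.coeff 0) • (1 : HamAlg p q)
        = (υ • y - μ • (1 : HamAlg p q)) - ((-(s.coeff 1)) • y - (s.coeff 0) • 1) := by
      module
    rw [h0, sub_self] at h1
    exact sub_eq_zero.mp h1
  have hts : -(s.coeff 1) = υ := by
    by_contra hne
    refine hy ⟨(υ - (-(s.coeff 1)))⁻¹ * (μ - s.coeff 0), ?_⟩
    rw [Algebra.algebraMap_eq_smul_one, mul_smul, ← keys, smul_smul,
      inv_mul_cancel₀ (sub_ne_zero.mpr (fun hh => hne hh.symm)), one_smul]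
  have hs0 : algebraMap F (HamAlg p q) (s.coeff 0 - μ) = 0 := by
    have h1 : (μ - s.coeff 0) • (1 : HamAlg p q) = 0 := by
      rw [← keys, hts, sub_self]
      module
    have h2 : (s.coeff 0 - μ) • (1 : HamAlg p q) = -((μ - s.coeff 0) • (1 : HamAlg p q)) := by
      module
    rw [Algebra.algebraMap_eq_smul_one, h2, h1, neg_zero]
  -- the element w = ⟨x, y⟩ and its centrality
  set w : HamAlg p q := x * σ y + y * σ x with hwdef
  clear_value w
  have Hxx : ∀ z : HamAlg p q, x*(x*z) = τ•(x*z) - ν•z := by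
    intro z
    rw [← mul_assoc, hx2, sub_mul, smul_mul_assoc, smul_mul_assoc, one_mul]
  have Hyy2 : ∀ z : HamAlg p q, y*(y*z) = υ•(y*z) - μ•z := by
    intro z
    rw [← mul_assoc, hy2, sub_mul, smul_mul_assoc, smul_mul_assoc, one_mul]
  have hwx : w * x = x * w := by
    have e2 : w * x - x * w = 0 := by
      rw [hwdef, hσx, hσy]
      simp only [mul_sub, sub_mul, mul_add, add_mul, mul_smul_comm, smul_mul_assoc, smul_smul,
        mul_one, one_mul, mul_assoc]
      simp only [Hxx, hx2]
      simp only [mul_sub, sub_mul, mul_add, add_mul, mul_smul_comm, smul_mul_assoc, smul_smul,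
        mul_one, one_mul, mul_assoc]
      module
    exact sub_eq_zero.mp e2
  have hwy : w * y = y * w := by
    have e2 : w * y - y * w = 0 := by
      rw [hwdef, hσx, hσy]
      simp only [mul_sub, sub_mul, mul_add, add_mul, mul_smul_comm, smul_mul_assoc, smul_smul,
        mul_one, one_mul, mul_assoc]
      simp only [Hyy2, hy2]
      simp only [mul_sub, sub_mul, mul_add, add_mul, mul_smul_comm, smul_mul_assoc, smul_smul,
        mul_one, one_mul, mul_assoc]
      module
    exact sub_eq_zero.mp e2
  have hga : genA p q = d⁻¹ • (x - c • (1 : HamAlg p q)) := by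
    rw [hxcd, add_sub_cancel_left, smul_smul, inv_mul_cancel₀ hd, one_smul]
  have hgb : genB p q = f⁻¹ • (y - e • (1 : HamAlg p q)) := by
    rw [hyef, add_sub_cancel_left, smul_smul, inv_mul_cancel₀ hf, one_smul]
  have hwa : w * genA p q = genA p q * w := by
    rw [hga]
    simp only [mul_smul_comm, smul_mul_assoc, mul_sub, sub_mul, mul_one, one_mul, hwx]
  have hwb : w * genB p q = genB p q * w := by
    rw [hgb]
    simp only [mul_smul_comm, smul_mul_assoc, mul_sub, sub_mul, mul_one, one_mul, hwy]
  have hwc : w ∈ Subalgebra.center F (HamAlg p q) := by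
    rw [Subalgebra.mem_center_iff]
    intro g
    obtain ⟨u, rfl⟩ := RingQuot.mkAlgHom_surjective F (hamRel p q) g
    refine FreeAlgebra.induction F (Fin 2)
      (motive := fun u => (RingQuot.mkAlgHom F (hamRel p q)) u * w
        = w * ((RingQuot.mkAlgHom F (hamRel p q)) u)) ?_ ?_ ?_ ?_ u
    · intro t
      rw [AlgHom.commutes]
      exact Algebra.commutes t w
    · intro i
      fin_cases i
      · exact hwa.symm
      · exact hwb.symm
    · intro u v hu hv
      rw [map_mul, mul_assoc, hv, ← mul_assoc, hu, mul_assoc]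
    · intro u v hu hv
      rw [map_add, add_mul, hu, hv]
      exact (mul_add _ _ _).symm
  -- the ten inner products
  have G00 : (1 : HamAlg p q) + 1 = 1 * σ 1 + 1 * σ 1 := by
    rw [hone, mul_one]
  have G01 : algebraMap F (HamAlg p q) τ = 1 * σ x + x * σ 1 := by
    rw [hone, one_mul, mul_one, hσx, Algebra.algebraMap_eq_smul_one]; abel
  have G02 : algebraMap F (HamAlg p q) υ = 1 * σ y + y * σ 1 := by
    rw [hone, one_mul, mul_one, hσy, Algebra.algebraMap_eq_smul_one]; abel
  have G03 : algebraMap F (HamAlg p q) τ * algebraMap F (HamAlg p q) υ - w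
      = 1 * σ (x*y) + (x*y) * σ 1 := by
    rw [hone, one_mul, mul_one, hmul, hwdef, hσx, hσy]
    simp only [Algebra.algebraMap_eq_smul_one]
    simp only [mul_sub, sub_mul, mul_add, add_mul, mul_smul_comm, smul_mul_assoc, smul_smul,
      mul_one, one_mul, mul_assoc]
    module
  have G11 : algebraMap F (HamAlg p q) ν + algebraMap F (HamAlg p q) ν
      = x * σ x + x * σ x := by
    rw [hxsx, Algebra.algebraMap_eq_smul_one]
  have G12 : w = x * σ y + y * σ x := hwdef
  have G13 : algebraMap F (HamAlg p q) υ * algebraMap F (HamAlg p q) ν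
      = x * σ (x*y) + (x*y) * σ x := by
    rw [hmul, hσy]
    simp only [Algebra.algebraMap_eq_smul_one]
    simp only [mul_sub, sub_mul, mul_add, add_mul, mul_smul_comm, smul_mul_assoc, smul_smul,
      mul_one, one_mul, mul_assoc]
    rw [hxsx]
    module
  have G22 : algebraMap F (HamAlg p q) μ + algebraMap F (HamAlg p q) μ
      = y * σ y + y * σ y := by
    rw [hysy, Algebra.algebraMap_eq_smul_one]
  have Hyy : ∀ z : HamAlg p q, y*(y*z) = υ•(y*z) - μ•z := by
    intro z
    rw [← mul_assoc, hy2, sub_mul, smul_mul_assoc, smul_mul_assoc, one_mul]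
  have G23 : algebraMap F (HamAlg p q) τ * algebraMap F (HamAlg p q) μ
      = y * σ (x*y) + (x*y) * σ y := by
    rw [hmul, hσy]
    simp only [Algebra.algebraMap_eq_smul_one]
    simp only [mul_sub, sub_mul, mul_add, add_mul, mul_smul_comm, smul_mul_assoc, smul_smul,
      mul_one, one_mul, mul_assoc]
    rw [Hyy, hy2, hσx]
    simp only [mul_sub, sub_mul, mul_add, add_mul, mul_smul_comm, smul_mul_assoc, smul_smul,
      mul_one, one_mul, mul_assoc]
    module
  have G33 : algebraMap F (HamAlg p q) μ * algebraMap F (HamAlg p q) ν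
        + algebraMap F (HamAlg p q) μ * algebraMap F (HamAlg p q) ν
      = (x*y) * σ (x*y) + (x*y) * σ (x*y) := by
    rw [hmul]
    simp only [Algebra.algebraMap_eq_smul_one, mul_assoc]
    rw [show y * (σ y * σ x) = (y * σ y) * σ x from (mul_assoc _ _ _).symm, hysy]
    simp only [smul_mul_assoc, mul_smul_comm, one_mul, smul_smul]
    rw [hxsx]
    module
  set Z := Subalgebra.center F (HamAlg p q) with hZ
  set T : ↥Z := algebraMap F ↥Z τ with hT
  set U : ↥Z := algebraMap F ↥Z υ with hU
  set N : ↥Z := algebraMap F ↥Z ν with hN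
  set Mm : ↥Z := algebraMap F ↥Z μ with hMm
  set W : ↥Z := (⟨w, hwc⟩ : ↥Z) with hW
  refine ⟨!![1+1, T, U, T*U - W;
             T, N+N, W, U*N;
             U, W, Mm+Mm, T*Mm;
             T*U - W, U*N, T*Mm, Mm*N+Mm*N], ?_, ?_⟩
  · intro i j
    fin_cases i <;> fin_cases j <;>
      simp only [Matrix.of_apply, Matrix.cons_val', Matrix.cons_val_zero, Matrix.cons_val_one, Matrix.head_cons,
        Matrix.empty_val', Matrix.cons_val_fin_one, Matrix.head_fin_const, Matrix.cons_val_succ,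
        Matrix.cons_val_two, Matrix.cons_val_three, Matrix.tail_cons, Fin.reduceFinMk,
        Nat.succ_eq_add_one, Nat.reduceAdd, Fin.mk_zero, Fin.mk_one,
        Fin.isValue, hT, hU, hN, hMm, hW, Subalgebra.coe_algebraMap, AddSubgroupClass.coe_sub,
        AddMemClass.coe_add, MulMemClass.coe_mul, OneMemClass.coe_one] <;>
      first
        | exact G00 | exact G01 | exact G02 | exact G03 | exact G11
        | exact G12 | exact G13 | exact G22 | exact G23 | exact G33
        | (rw [add_comm]
           first
             | exact G01 | exact G02 | exact G03 | exact G12 | exact G13 | exact G23)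
  · have hdet := aux_det T U N Mm W
    erw [hdet]
    have hsplit : algebraMap F (HamAlg p q) (τ^2*μ + υ^2*ν - 4*(ν*μ))
        = (algebraMap F (HamAlg p q) τ^2 * algebraMap F (HamAlg p q) μ
            + algebraMap F (HamAlg p q) υ^2 * algebraMap F (HamAlg p q) ν)
          - (algebraMap F (HamAlg p q) ν * algebraMap F (HamAlg p q) μ
              + algebraMap F (HamAlg p q) ν * algebraMap F (HamAlg p q) μ
              + algebraMap F (HamAlg p q) ν * algebraMap F (HamAlg p q) μ
              + algebraMap F (HamAlg p q) ν * algebraMap F (HamAlg p q) μ) := by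
      rw [map_sub, map_add, map_mul, map_mul, map_mul, map_pow, map_pow, map_mul, map_ofNat]
      noncomm_ring
    have hconst : algebraMap F (HamAlg p q)
        (τ^2 * s.coeff 0 + υ^2 * r.coeff 0 - 4 * r.coeff 0 * s.coeff 0)
        = algebraMap F (HamAlg p q) (τ^2*μ + υ^2*ν - 4*(ν*μ)) := by
      rw [show τ^2 * s.coeff 0 + υ^2 * r.coeff 0 - 4 * r.coeff 0 * s.coeff 0
          = (τ^2*μ + υ^2*ν - 4*(ν*μ)) + (r.coeff 0 - ν)*(υ^2 - 4*s.coeff 0)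
            + (s.coeff 0 - μ)*(τ^2 - 4*ν) from by ring,
        map_add, map_add, map_mul, map_mul, hr0, hs0, zero_mul, zero_mul, add_zero, add_zero]
    rw [htr, hts, map_mul, hconst, hsplit]
    simp only [hT, hU, hN, hMm, hW, SubmonoidClass.coe_pow, MulMemClass.coe_mul,
      AddSubgroupClass.coe_sub, AddMemClass.coe_add, Subalgebra.coe_algebraMap,
      Subalgebra.coe_sub, Subalgebra.coe_pow, Subalgebra.coe_mul, Subalgebra.coe_add]
    rfl
end
end

section
/- Let L be a field and A a 4-dimensional unital associative L-algebra equipped with an L-linear involution x ↦ x̄ (an antiautomorphism of A with x̄̄ = x) such that x·x̄ ∈ L·1 for every x ∈ A. Identifying x·ȳ + y·x̄ with an element ⟨x,y⟩ of L, assume the symmetric bilinear form ⟨−,−⟩ on A is nondegenerate. Then there exist a 2-dimensional L-vector space V and a quadratic form Q on V whose polar bilinear form is nondegenerate, together with an isomorphism of L-algebras from the Clifford algebra of Q onto A; moreover, under this isomorphism the involution x ↦ x̄ corresponds to the Clifford conjugation (the composite of the grade involution and the reversal anti-automorphism) of the Clifford algebra. -/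
noncomputable section

set_option maxHeartbeats 1000000

/-- **Recognition theorem for quaternion algebras.** Let `A` be a 4-dimensional algebra over a
field `L`, equipped with an `L`-linear involution `x ↦ x̄` (an antiautomorphism of square the
identity) such that `x·x̄` is scalar for all `x`, and such that the associated inner product
`⟨x,y⟩ = x·ȳ + y·x̄` (valued in `L`) is nondegenerate. Then `A` is isomorphic, as an
`L`-algebra, to the Clifford algebra of a 2-dimensional quadratic form with nondegenerate
polar form, in such a way that the involution corresponds to the Clifford conjugation
(the composite of the grade involution and the reversal). -/
theorem statement16 (L : Type*) [Field L] (A : Type*) [Ring A] [Algebra L A]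
    (hdim : Module.finrank L A = 4)
    (bar : A →ₗ[L] A)
    (hmul : ∀ x y : A, bar (x * y) = bar y * bar x)
    (hinv : ∀ x : A, bar (bar x) = x)
    (B : A → A → L)
    (hB : ∀ x y : A, x * bar y + y * bar x = algebraMap L A (B x y))
    (hnd : ∀ x : A, (∀ y : A, B x y = 0) → x = 0) :
    ∃ Q : QuadraticForm L (Fin 2 → L),
      (∀ v : Fin 2 → L, (∀ w : Fin 2 → L, QuadraticMap.polar Q v w = 0) → v = 0) ∧
      ∃ e : CliffordAlgebra Q ≃ₐ[L] A,
        ∀ z : CliffordAlgebra Q,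
          e (CliffordAlgebra.reverse (CliffordAlgebra.involute z)) = bar (e z) := by
  have hfd : FiniteDimensional L A := Module.finite_of_finrank_pos (by rw [hdim]; norm_num)
  have hnt : Nontrivial A := Module.nontrivial_of_finrank_pos (R := L) (by rw [hdim]; norm_num)
  have inj : Function.Injective (algebraMap L A) := (algebraMap L A).injective
  have bar1 : bar 1 = 1 := by
    have h : ∀ x : A, x * bar 1 = x := by
      intro x
      have h1 : bar (x * bar 1) = bar x := by rw [hmul, hinv, one_mul]
      have h2 := congrArg bar h1
      rwa [hinv, hinv] at h2
    calc bar 1 = 1 * bar 1 := (one_mul _).symm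
    _ = 1 := h 1
  have hB' : ∀ x y : A, x * bar y + y * bar x = B x y • (1:A) := by
    intro x y; rw [hB, Algebra.algebraMap_eq_smul_one]
  have injs : ∀ c d : L, c • (1:A) = d • (1:A) → c = d := by
    intro c d h
    have := inj (a₁ := c) (a₂ := d)
    apply this
    rwa [Algebra.algebraMap_eq_smul_one, Algebra.algebraMap_eq_smul_one]
  have injs0 : ∀ c : L, c • (1:A) = 0 → c = 0 := by
    intro c h; apply injs; rw [h, zero_smul]
  have Bsymm : ∀ x y, B x y = B y x := by
    intro x y; apply injs; rw [← hB', ← hB', add_comm]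
  have Badd : ∀ x x' y, B (x + x') y = B x y + B x' y := by
    intro x x' y; apply injs
    rw [add_smul, ← hB', ← hB', ← hB', map_add, add_mul, mul_add]; abel
  have Bsmul : ∀ (c : L) x y, B (c • x) y = c * B x y := by
    intro c x y; apply injs
    rw [mul_smul, ← hB', ← hB', map_smul, smul_mul_assoc, mul_smul_comm, ← smul_add]
  have Bzero : ∀ y : A, B 0 y = 0 := by
    intro y
    have := Badd 0 0 y
    rw [add_zero] at this
    exact (left_eq_add.mp this)
  have Bsub : ∀ x x' y : A, B (x - x') y = B x y - B x' y := by
    intro x x' y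
    have h1 : B (-x') y = - B x' y := by
      have := Bsmul (-1) x' y; rw [neg_one_smul] at this; rw [this]; ring
    rw [sub_eq_add_neg, Badd, h1]; ring
  have Badd2 : ∀ x y y' : A, B x (y + y') = B x y + B x y' := by
    intro x y y'; rw [Bsymm, Badd, Bsymm y, Bsymm y']
  have Bsmul2 : ∀ (c : L) (x y : A), B x (c • y) = c * B x y := by
    intro c x y; rw [Bsymm, Bsmul, Bsymm]
  have hbar_eq : ∀ x : A, bar x = B x 1 • (1:A) - x := by
    intro x
    have := hB' x 1
    rw [bar1, mul_one, one_mul] at this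
    exact eq_sub_of_add_eq' this
  have hstar : ∀ x y : A, x * y + y * x = B y 1 • x + B x 1 • y - B x y • (1:A) := by
    intro x y
    rw [← hB' x y, hbar_eq x, hbar_eq y, mul_sub, mul_sub, mul_smul_comm, mul_smul_comm,
      mul_one, mul_one]
    abel
  have mkfun : ∀ x : A, ∃ f : A →ₗ[L] L, ∀ y, f y = B x y := by
    intro x
    refine ⟨⟨⟨fun y => B x y, fun y y' => Badd2 x y y'⟩, fun c y => Bsmul2 c x y⟩, fun y => rfl⟩
  have keydim : ∀ f g : A →ₗ[L] L,
      ¬ ((LinearMap.ker f ⊓ LinearMap.ker g) ≤ Submodule.span L {(1:A)}) := by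
    intro f g hle
    have h1 := LinearMap.finrank_range_add_finrank_ker (f.prod g)
    rw [hdim, LinearMap.ker_prod] at h1
    have h2 : Module.finrank L ↥(LinearMap.range (f.prod g)) ≤ 2 := by
      have := Submodule.finrank_le (LinearMap.range (f.prod g))
      simpa using this
    have h5 : Module.finrank L ↥(LinearMap.ker f ⊓ LinearMap.ker g) ≤ 1 := by
      have hm := Submodule.finrank_mono hle
      have h6 : Module.finrank L ↥(Submodule.span L {(1:A)}) = 1 := by
        have : Submodule.span L {(1:A)} = (L ∙ (1:A)) := rfl
        rw [this, finrank_span_singleton (one_ne_zero)]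
      omega
    omega
  -- extraction of a non-scalar vector orthogonal to two given vectors
  have hex : ∀ x1 x2 : A, ∃ z : A, B x1 z = 0 ∧ B x2 z = 0 ∧ ∀ c : L, z ≠ c • 1 := by
    intro x1 x2
    obtain ⟨f, hf⟩ := mkfun x1
    obtain ⟨g, hg⟩ := mkfun x2
    have := keydim f g
    rw [SetLike.not_le_iff_exists] at this
    obtain ⟨z, hz, hznot⟩ := this
    obtain ⟨hz1, hz2⟩ := Submodule.mem_inf.mp hz
    refine ⟨z, by rw [← hf]; exact hz1, by rw [← hg]; exact hz2, ?_⟩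
    intro c hc
    exact hznot (by rw [hc]; exact Submodule.smul_mem _ c (Submodule.mem_span_singleton_self _))
  -- an element of trace one
  have hu : ∃ u : A, B u 1 = 1 := by
    by_cases hw : ∃ w : A, B w 1 ≠ 0
    · obtain ⟨w, hw⟩ := hw
      exact ⟨(B w 1)⁻¹ • w, by rw [Bsmul, inv_mul_cancel₀ hw]⟩
    · exfalso
      push_neg at hw
      have habar : ∀ x : A, bar x = -x := by
        intro x; rw [hbar_eq, hw, zero_smul, zero_sub]
      have hanti : ∀ x y : A, y * x = -(x * y) := by
        intro x y
        have := hmul x y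
        rw [habar, habar, habar, neg_mul_neg] at this
        rw [← this]
      have hzero : ∀ x y : A, B x y = 0 := by
        intro x y
        apply injs0
        rw [← hB', habar, habar, mul_neg, mul_neg, hanti x y]
        abel
      exact one_ne_zero (hnd 1 (hzero 1))
  obtain ⟨u, hu⟩ := hu
  -- the radical of B restricted to trace-zero elements is scalar
  have hrad : ∀ z : A, B z 1 = 0 → (∀ y : A, B y 1 = 0 → B z y = 0) → z = B z u • 1 := by
    intro z hz hzy
    have key : ∀ y : A, B (z - B z u • 1) y = 0 := by
      intro y
      have hy' : B (y - B y 1 • u) 1 = 0 := by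
        rw [Bsub, Bsmul, hu, mul_one, sub_self]
      have h1 : B z (y - B y 1 • u) = 0 := hzy _ hy'
      have h2 : B z y = B y 1 * B z u := by
        have := h1
        rw [Bsymm, Bsub, Bsmul, Bsymm y z] at this
        have h3 := sub_eq_zero.mp this
        rw [h3, Bsymm u z]
      rw [Bsub, Bsmul, h2, Bsymm 1 y]
      ring
    exact sub_eq_zero.mp (hnd _ key)
  -- trace-zero elements square to scalars
  have hsq : ∀ v : A, B v 1 = 0 → ∃ c : L, v * v = c • (1:A) := by
    intro v hv
    have hbarv : bar v = -v := by rw [hbar_eq, hv, zero_smul, zero_sub]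
    by_cases h2 : (2:L) = 0
    · -- characteristic 2
      have hvy : ∀ y : A, v * y + y * v = B y 1 • v - B v y • (1:A) := by
        intro y; rw [hstar, hv, zero_smul]; abel
      have hcen : ∀ y : A, (v * v) * y = y * (v * v) := by
        intro y
        have e1 : v * (v * y + y * v) = (v * y + y * v) * v := by
          rw [hvy, sub_mul, mul_sub, smul_mul_assoc, mul_smul_comm, smul_mul_assoc,
            mul_smul_comm, one_mul, mul_one]
        rw [mul_add, add_mul] at e1
        have e2 : v * (v * y) + v * (y * v) = v * (y * v) + y * (v * v) := by
          rw [e1]; rw [mul_assoc, mul_assoc]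
        have e3 : v * (v * y) + v * (y * v) = y * (v * v) + v * (y * v) := by
          rw [e2]; abel
        have e4 := add_right_cancel e3
        rw [← mul_assoc] at e4; exact e4
      have hzz : ∀ y : A, B y 1 • (v * v) + B (v*v) 1 • y - B (v*v) y • (1:A) = 0 := by
        intro y
        have := hstar (v*v) y
        rw [hcen y] at this
        have h4 : y * (v*v) + y * (v*v) = (2:L) • (y * (v*v)) := (two_smul L _).symm
        rw [h4, h2, zero_smul] at this
        exact this.symm
      have htz : B (v*v) 1 = 0 := by
        by_contra htz
        obtain ⟨z, hz1, _, hznot⟩ := hex 1 1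
        have hz1' : B z 1 = 0 := by rw [Bsymm]; exact hz1
        have := hzz z
        rw [hz1', zero_smul, zero_add] at this
        have h5 : z = (B (v*v) 1)⁻¹ • (B (v*v) z • (1:A)) := by
          have h6 := sub_eq_zero.mp this
          calc z = (B (v*v) 1)⁻¹ • (B (v*v) 1 • z) := by rw [inv_smul_smul₀ htz]
          _ = (B (v*v) 1)⁻¹ • (B (v*v) z • (1:A)) := by rw [h6]
        rw [smul_smul] at h5
        exact hznot _ h5
      have hby : ∀ y : A, B y 1 = 0 → B (v*v) y = 0 := by
        intro y hy
        have := hzz y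
        rw [htz, zero_smul, hy, zero_smul, zero_add, zero_sub, neg_eq_zero] at this
        exact injs0 _ this
      exact ⟨B (v*v) u, hrad (v*v) htz hby⟩
    · -- characteristic ≠ 2
      refine ⟨(2:L)⁻¹ * (-(B v v)), ?_⟩
      have := hB' v v
      rw [hbarv, mul_neg] at this
      have h4 : -(v*v) + -(v*v) = (2:L) • (-(v*v)) := (two_smul L _).symm
      rw [h4] at this
      have h5 : -(v*v) = (2:L)⁻¹ • (B v v • (1:A)) := by
        rw [← this, inv_smul_smul₀ h2]
      have h7 := congrArg Neg.neg h5
      rw [neg_neg] at h7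
      rw [h7, smul_smul, ← neg_smul]
      congr 1
      ring
  -- choice of a nondegenerate two-dimensional trace-zero subspace
  obtain ⟨v1, v2, hv1, hv2, hD0⟩ :
      ∃ v1 v2 : A, B v1 1 = 0 ∧ B v2 1 = 0 ∧ B v1 v1 * B v2 v2 - B v1 v2 * B v1 v2 ≠ 0 := by
    by_cases hx : ∃ x : A, B x 1 = 0 ∧ B x x ≠ 0
    · obtain ⟨x, hx1, hxx⟩ := hx
      by_cases hz : ∃ z : A, B z 1 = 0 ∧ B x z = 0 ∧ B z z ≠ 0
      · obtain ⟨z, hz1, hxz, hzz⟩ := hz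
        refine ⟨x, z, hx1, hz1, ?_⟩
        rw [hxz]
        simpa using mul_ne_zero hxx hzz
      · push_neg at hz
        by_cases hw : ∃ z1 z2 : A,
            (B z1 1 = 0 ∧ B x z1 = 0) ∧ (B z2 1 = 0 ∧ B x z2 = 0) ∧ B z1 z2 ≠ 0
        · obtain ⟨z1, z2, ⟨h11, h12⟩, ⟨h21, h22⟩, hz12⟩ := hw
          refine ⟨z1, z2, h11, h21, ?_⟩
          rw [hz z1 h11 h12, hz z2 h21 h22]
          simpa using mul_ne_zero hz12 hz12
        · push_neg at hw
          exfalso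
          obtain ⟨z, hz1B, hzxB, hznot⟩ := hex 1 x
          have hz1' : B z 1 = 0 := by rw [Bsymm]; exact hz1B
          have hzx : B z x = 0 := by rw [Bsymm]; exact hzxB
          have hall : ∀ y : A, B y 1 = 0 → B z y = 0 := by
            intro y hy
            have hy'1 : B (y - (B x y / B x x) • x) 1 = 0 := by
              rw [Bsub, Bsmul, hx1, hy]; ring
            have hy'2 : B x (y - (B x y / B x x) • x) = 0 := by
              rw [Bsymm, Bsub, Bsmul, Bsymm y x]
              field_simp
              ring
            have h3 : B z (y - (B x y / B x x) • x) = 0 := by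
              rw [Bsymm]
              exact hw _ z ⟨hy'1, hy'2⟩ ⟨hz1', hzxB⟩
            have h4 : y = (y - (B x y / B x x) • x) + (B x y / B x x) • x := by abel
            rw [h4, Badd2, h3, Bsmul2, hzx]
            ring
          exact hznot _ (hrad z hz1' hall)
    · push_neg at hx
      by_cases hw : ∃ x y : A, B x 1 = 0 ∧ B y 1 = 0 ∧ B x y ≠ 0
      · obtain ⟨x, y, hx1, hy1, hxy⟩ := hw
        refine ⟨x, y, hx1, hy1, ?_⟩
        rw [hx x hx1, hx y hy1]
        simpa using mul_ne_zero hxy hxy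
      · push_neg at hw
        exfalso
        obtain ⟨z, hz1B, _, hznot⟩ := hex 1 1
        have hz1' : B z 1 = 0 := by rw [Bsymm]; exact hz1B
        exact hznot _ (hrad z hz1' (fun y hy => hw z y hz1' hy))
  obtain ⟨q1, hq1⟩ := hsq v1 hv1
  obtain ⟨q2, hq2⟩ := hsq v2 hv2
  have hbarv1 : bar v1 = -v1 := by rw [hbar_eq, hv1, zero_smul, zero_sub]
  have hbarv2 : bar v2 = -v2 := by rw [hbar_eq, hv2, zero_smul, zero_sub]
  set p : L := B v1 v2 with hp
  have hanti : v1 * v2 + v2 * v1 = (-p) • (1:A) := by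
    rw [hstar, hv1, hv2, zero_smul, zero_smul, neg_smul]
    abel
  have hBv1v1 : B v1 v1 = -(2*q1) := by
    apply injs
    rw [← hB' v1 v1, hbarv1, mul_neg, hq1]
    module
  have hBv2v2 : B v2 v2 = -(2*q2) := by
    apply injs
    rw [← hB' v2 v2, hbarv2, mul_neg, hq2]
    module
  have hD : 4*(q1*q2) - p*p ≠ 0 := by
    intro h
    apply hD0
    rw [hBv1v1, hBv2v2]
    linear_combination h
  -- the quadratic form
  set F : LinearMap.BilinMap L (Fin 2 → L) L :=
    LinearMap.mk₂ L (fun c d => q1 * (c 0 * d 0) + q2 * (c 1 * d 1) - p * (c 0 * d 1))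
      (by intros; simp only [Pi.add_apply]; ring)
      (by intros; simp only [Pi.smul_apply, smul_eq_mul]; ring)
      (by intros; simp only [Pi.add_apply]; ring)
      (by intros; simp only [Pi.smul_apply, smul_eq_mul]; ring) with hF
  set Q : QuadraticForm L (Fin 2 → L) := F.toQuadraticMap with hQdef
  have hQ : ∀ c : Fin 2 → L, Q c = q1 * (c 0 * c 0) + q2 * (c 1 * c 1) - p * (c 0 * c 1) := by
    intro c
    rw [hQdef, LinearMap.BilinMap.toQuadraticMap_apply, hF, LinearMap.mk₂_apply]
  have hpolar : ∀ c d : Fin 2 → L, QuadraticMap.polar Q c d =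
      (q1 * (c 0 * d 0) + q2 * (c 1 * d 1) - p * (c 0 * d 1))
      + (q1 * (d 0 * c 0) + q2 * (d 1 * c 1) - p * (d 0 * c 1)) := by
    intro c d
    rw [hQdef, LinearMap.BilinMap.polar_toQuadraticMap, hF, LinearMap.mk₂_apply,
      LinearMap.mk₂_apply]
  have hndQ : ∀ v : Fin 2 → L, (∀ w : Fin 2 → L, QuadraticMap.polar Q v w = 0) → v = 0 := by
    intro v hv
    have e1 := hv ![1, 0]
    have e2 := hv ![0, 1]
    rw [hpolar] at e1 e2
    simp only [Matrix.cons_val_zero, Matrix.cons_val_one, Matrix.head_cons, mul_one, mul_zero,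
      zero_mul, one_mul, add_zero, zero_add, sub_zero] at e1 e2
    have h0 : v 0 = 0 := by
      have h : (4*(q1*q2) - p*p) * v 0 = 0 := by linear_combination (2*q2) * e1 + p * e2
      rcases mul_eq_zero.mp h with h | h
      · exact absurd h hD
      · exact h
    have h1 : v 1 = 0 := by
      have h : (4*(q1*q2) - p*p) * v 1 = 0 := by linear_combination p * e1 + (2*q1) * e2
      rcases mul_eq_zero.mp h with h | h
      · exact absurd h hD
      · exact h
    funext idx
    fin_cases idx
    · exact h0
    · exact h1
  -- the linear map into A
  set f : (Fin 2 → L) →ₗ[L] A :=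
    { toFun := fun c => c 0 • v1 + c 1 • v2
      map_add' := by intros a b; simp only [Pi.add_apply, add_smul]; abel
      map_smul' := by intros c a; simp only [Pi.smul_apply, smul_eq_mul, RingHom.id_apply,
        smul_add, mul_smul] } with hfdef
  have hfapp : ∀ c : Fin 2 → L, f c = c 0 • v1 + c 1 • v2 := fun c => rfl
  have hf : ∀ c : Fin 2 → L, f c * f c = algebraMap L A (Q c) := by
    intro c
    rw [hfapp, Algebra.algebraMap_eq_smul_one, hQ]
    rw [add_mul, mul_add, mul_add, smul_mul_assoc, smul_mul_assoc, smul_mul_assoc,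
      smul_mul_assoc, mul_smul_comm, mul_smul_comm, mul_smul_comm, mul_smul_comm,
      hq1, hq2]
    have hcomb : (c 1 : L) • (c 0 : L) • (v2 * v1) = (c 0) • (c 1) • (v2 * v1) := by
      rw [smul_smul, smul_smul, mul_comm]
    rw [hcomb]
    have h21 : v2 * v1 = (-p) • (1:A) - v1 * v2 := by
      rw [← hanti]; abel
    rw [h21]
    module
  -- facts about products needed for linear independence
  have hbarz : bar (v1 * v2) = v2 * v1 := by
    rw [hmul, hbarv1, hbarv2, neg_mul_neg]
  have hB11 : B (1:A) 1 = 2 := by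
    apply injs
    rw [← hB', bar1, mul_one]
    module
  have hBz1 : B (v1 * v2) 1 = -p := by
    apply injs
    rw [← hB', bar1, mul_one, one_mul, hbarz, hanti]
  have hBzv1 : B (v1 * v2) v1 = 0 := by
    apply injs
    rw [← hB', hbarv1, hbarz, mul_neg, ← mul_assoc, zero_smul]
    abel
  have hBzv2 : B (v1 * v2) v2 = 0 := by
    apply injs
    rw [← hB', hbarv2, hbarz, mul_neg, zero_smul]
    have h1 : v1 * v2 * v2 = q2 • v1 := by rw [mul_assoc, hq2, mul_smul_comm, mul_one]
    have h2 : v2 * (v2 * v1) = q2 • v1 := by rw [← mul_assoc, hq2, smul_mul_assoc, one_mul]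
    rw [h1, h2]
    abel
  have hBzz : B (v1 * v2) (v1 * v2) = 2*(q1*q2) := by
    apply injs
    rw [← hB', hbarz]
    have h1 : v1 * v2 * (v2 * v1) = (q1 * q2) • (1:A) := by
      rw [mul_assoc, ← mul_assoc v2 v2 v1, hq2, smul_mul_assoc, one_mul, mul_smul_comm, hq1,
        smul_smul, mul_comm]
    rw [h1]
    module
  -- linear independence of 1, v1, v2, v1*v2
  have hLI : LinearIndependent L ![(1:A), v1, v2, v1*v2] := by
    rw [Fintype.linearIndependent_iff]
    intro g hg
    rw [Fin.sum_univ_four] at hg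
    simp only [Matrix.cons_val_zero, Matrix.cons_val_one, Matrix.head_cons,
      Matrix.cons_val_two, Matrix.tail_cons, Matrix.cons_val_three] at hg
    have E : ∀ y : A, g 0 * B 1 y + g 1 * B v1 y + g 2 * B v2 y + g 3 * B (v1*v2) y = 0 := by
      intro y
      have h0 : B (g 0 • (1:A) + g 1 • v1 + g 2 • v2 + g 3 • (v1*v2)) y = 0 := by
        rw [hg]; exact Bzero y
      rw [Badd, Badd, Badd, Bsmul, Bsmul, Bsmul, Bsmul] at h0
      exact h0
    have e1 := E 1
    rw [hB11, hv1, hv2, hBz1] at e1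
    have e2 := E v1
    rw [Bsymm 1 v1, hv1, hBv1v1, Bsymm v2 v1, ← hp, hBzv1] at e2
    have e3 := E v2
    rw [Bsymm 1 v2, hv2, hBv2v2, ← hp, hBzv2] at e3
    have e4 := E (v1*v2)
    rw [Bsymm 1 (v1*v2), hBz1, Bsymm v1 (v1*v2), hBzv1, Bsymm v2 (v1*v2), hBzv2, hBzz] at e4
    have hcancel : ∀ a : L, (4*(q1*q2) - p*p) * a = 0 → a = 0 := by
      intro a ha
      rcases mul_eq_zero.mp ha with h | h
      · exact absurd h hD
      · exact h
    have k0 : g 0 = 0 := hcancel _ (by linear_combination (2*(q1*q2))*e1 + p*e4)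
    have k1 : g 1 = 0 := hcancel _ (by linear_combination (-(2*q2))*e2 - p*e3)
    have k2 : g 2 = 0 := hcancel _ (by linear_combination (-p)*e2 - (2*q1)*e3)
    have k3 : g 3 = 0 := hcancel _ (by linear_combination p*e1 + 2*e4)
    intro k
    fin_cases k
    · exact k0
    · exact k1
    · exact k2
    · exact k3
  -- the spanning set of the Clifford algebra
  have hQb0 : Q ![1,0] = q1 := by rw [hQ]; simp
  have hQb1 : Q ![0,1] = q2 := by rw [hQ]; simp
  have hpol : QuadraticMap.polar Q ![1,0] ![0,1] = -p := by
    rw [hpolar]; simp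
  set i : CliffordAlgebra Q := CliffordAlgebra.ι Q ![1,0] with hi
  set j : CliffordAlgebra Q := CliffordAlgebra.ι Q ![0,1] with hj
  set W : Fin 4 → CliffordAlgebra Q := ![1, i, j, i*j] with hW
  set S : Submodule L (CliffordAlgebra Q) := Submodule.span L (Set.range W) with hS
  have hSmem : ∀ k : Fin 4, W k ∈ S := fun k => Submodule.subset_span ⟨k, rfl⟩
  have hS1 : (1 : CliffordAlgebra Q) ∈ S := hSmem 0
  have hSi : i ∈ S := hSmem 1
  have hSj : j ∈ S := hSmem 2
  have hSij : i * j ∈ S := hSmem 3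
  have hii : i * i = algebraMap L _ q1 := by rw [hi, CliffordAlgebra.ι_sq_scalar, hQb0]
  have hjj : j * j = algebraMap L _ q2 := by rw [hj, CliffordAlgebra.ι_sq_scalar, hQb1]
  have hji : j * i = algebraMap L _ (-p) - i * j := by
    rw [hi, hj, CliffordAlgebra.ι_mul_ι_comm, QuadraticMap.polar_comm, hpol]
  have heq_i_ij : i * (i * j) = q1 • j := by
    rw [← mul_assoc, hii, ← Algebra.smul_def]
  have heq_j_ij : j * (i * j) = (-p) • j - q2 • i := by
    rw [← mul_assoc, hji, sub_mul, ← Algebra.smul_def, mul_assoc, hjj,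
      ← Algebra.commutes, ← Algebra.smul_def]
  have heq_ij_i : (i * j) * i = (-p) • i - q1 • j := by
    rw [mul_assoc, hji, mul_sub, ← Algebra.commutes, ← Algebra.smul_def, ← mul_assoc, hii,
      ← Algebra.smul_def]
  have heq_ij_j : (i * j) * j = q2 • i := by
    rw [mul_assoc, hjj, ← Algebra.commutes, ← Algebra.smul_def]
  have heq_ij_ij : (i * j) * (i * j) = (-p) • (i * j) - q2 • (q1 • (1 : CliffordAlgebra Q)) := by
    rw [mul_assoc, heq_j_ij, mul_sub, mul_smul_comm, mul_smul_comm, hii,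
      Algebra.algebraMap_eq_smul_one]
  have hgen : ∀ k l : Fin 4, W k * W l ∈ S := by
    intro k l
    fin_cases k <;> fin_cases l
    · show (1:CliffordAlgebra Q) * 1 ∈ S
      rw [one_mul]; exact hS1
    · show (1:CliffordAlgebra Q) * i ∈ S
      rw [one_mul]; exact hSi
    · show (1:CliffordAlgebra Q) * j ∈ S
      rw [one_mul]; exact hSj
    · show (1:CliffordAlgebra Q) * (i * j) ∈ S
      rw [one_mul]; exact hSij
    · show i * 1 ∈ S
      rw [mul_one]; exact hSi
    · show i * i ∈ S
      rw [hii, Algebra.algebraMap_eq_smul_one]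
      exact Submodule.smul_mem _ _ hS1
    · show i * j ∈ S
      exact hSij
    · show i * (i * j) ∈ S
      rw [heq_i_ij]; exact Submodule.smul_mem _ _ hSj
    · show j * 1 ∈ S
      rw [mul_one]; exact hSj
    · show j * i ∈ S
      rw [hji, Algebra.algebraMap_eq_smul_one]
      exact sub_mem (Submodule.smul_mem _ _ hS1) hSij
    · show j * j ∈ S
      rw [hjj, Algebra.algebraMap_eq_smul_one]
      exact Submodule.smul_mem _ _ hS1
    · show j * (i * j) ∈ S
      rw [heq_j_ij]
      exact sub_mem (Submodule.smul_mem _ _ hSj) (Submodule.smul_mem _ _ hSi)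
    · show (i * j) * 1 ∈ S
      rw [mul_one]; exact hSij
    · show (i * j) * i ∈ S
      rw [heq_ij_i]
      exact sub_mem (Submodule.smul_mem _ _ hSi) (Submodule.smul_mem _ _ hSj)
    · show (i * j) * j ∈ S
      rw [heq_ij_j]; exact Submodule.smul_mem _ _ hSi
    · show (i * j) * (i * j) ∈ S
      rw [heq_ij_ij]
      exact sub_mem (Submodule.smul_mem _ _ hSij)
        (Submodule.smul_mem _ _ (Submodule.smul_mem _ _ hS1))
  have hmulS : ∀ x ∈ S, ∀ y ∈ S, x * y ∈ S := by
    intro x hx y hy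
    induction hx, hy using Submodule.span_induction₂ with
    | mem_mem x y hx hy =>
        obtain ⟨k, rfl⟩ := hx
        obtain ⟨l, rfl⟩ := hy
        exact hgen k l
    | zero_left y hy => simp only [zero_mul]; exact Submodule.zero_mem S
    | zero_right x hx => simp only [mul_zero]; exact Submodule.zero_mem S
    | add_left x y z hx hy hz h1 h2 => rw [add_mul]; exact add_mem h1 h2
    | add_right x y z hx hy hz h1 h2 => rw [mul_add]; exact add_mem h1 h2
    | smul_left r x y hx hy h => rw [smul_mul_assoc]; exact Submodule.smul_mem _ _ h
    | smul_right r x y hx hy h => rw [mul_smul_comm]; exact Submodule.smul_mem _ _ h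
  have hspanCl : ∀ z : CliffordAlgebra Q, z ∈ S := by
    intro z
    induction z using CliffordAlgebra.induction with
    | algebraMap r =>
        rw [Algebra.algebraMap_eq_smul_one]
        exact Submodule.smul_mem _ _ hS1
    | ι v =>
        have hv : v = v 0 • ![(1:L),0] + v 1 • ![(0:L),1] := by
          funext idx; fin_cases idx <;> simp
        rw [hv, map_add, map_smul, map_smul, ← hi, ← hj]
        exact add_mem (Submodule.smul_mem _ _ hSi) (Submodule.smul_mem _ _ hSj)
    | mul a b ha hb => exact hmulS a ha b hb
    | add a b ha hb => exact add_mem ha hb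
  -- the algebra morphism
  set φ : CliffordAlgebra Q →ₐ[L] A := CliffordAlgebra.lift Q ⟨f, hf⟩ with hφ
  have hφι : ∀ c : Fin 2 → L, φ (CliffordAlgebra.ι Q c) = f c :=
    fun c => CliffordAlgebra.lift_ι_apply _ _ c
  have hfb0 : f ![1,0] = v1 := by rw [hfapp]; simp
  have hfb1 : f ![0,1] = v2 := by rw [hfapp]; simp
  have hφW : ∀ k : Fin 4, φ (W k) = ![(1:A), v1, v2, v1*v2] k := by
    intro k
    fin_cases k
    · show φ 1 = 1; exact map_one φ
    · show φ i = v1; rw [hi, hφι, hfb0]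
    · show φ j = v2; rw [hj, hφι, hfb1]
    · show φ (i * j) = v1 * v2; rw [map_mul, hi, hj, hφι, hφι, hfb0, hfb1]
  have hinjφ : Function.Injective φ := by
    rw [injective_iff_map_eq_zero]
    intro z hz
    have hzS := hspanCl z
    rw [hS, Submodule.mem_span_range_iff_exists_fun] at hzS
    obtain ⟨c, hc⟩ := hzS
    have h2 : ∑ k : Fin 4, c k • ![(1:A), v1, v2, v1*v2] k = 0 := by
      have h3 := congrArg φ hc
      rw [map_sum] at h3
      simp only [map_smul, hφW] at h3
      rw [h3, hz]
    have hc0 := Fintype.linearIndependent_iff.mp hLI c h2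
    rw [← hc]
    simp [hc0]
  have hsurjφ : Function.Surjective φ := by
    have hspanA : Submodule.span L (Set.range ![(1:A), v1, v2, v1*v2]) = ⊤ :=
      hLI.span_eq_top_of_card_eq_finrank (by simp [hdim])
    intro a
    have ha : a ∈ Submodule.span L (Set.range ![(1:A), v1, v2, v1*v2]) := by
      rw [hspanA]; exact Submodule.mem_top
    rw [Submodule.mem_span_range_iff_exists_fun] at ha
    obtain ⟨c, hc⟩ := ha
    refine ⟨∑ k : Fin 4, c k • W k, ?_⟩
    rw [map_sum]
    simp only [map_smul, hφW]
    exact hc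
  have hconj : ∀ z : CliffordAlgebra Q,
      φ (CliffordAlgebra.reverse (CliffordAlgebra.involute z)) = bar (φ z) := by
    intro z
    induction z using CliffordAlgebra.induction with
    | algebraMap r =>
        rw [AlgHom.commutes, CliffordAlgebra.reverse.commutes, AlgHom.commutes,
          Algebra.algebraMap_eq_smul_one, map_smul, bar1]
    | ι v =>
        rw [CliffordAlgebra.involute_ι, map_neg, CliffordAlgebra.reverse_ι, map_neg, hφι, hfapp,
          map_add, map_smul, map_smul, hbarv1, hbarv2]
        module
    | mul a b ha hb =>
        calc φ (CliffordAlgebra.reverse (CliffordAlgebra.involute (a*b)))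
            = φ (CliffordAlgebra.reverse
                (CliffordAlgebra.involute a * CliffordAlgebra.involute b)) := by
              rw [map_mul CliffordAlgebra.involute a b]
        _ = φ (CliffordAlgebra.reverse (CliffordAlgebra.involute b)
              * CliffordAlgebra.reverse (CliffordAlgebra.involute a)) := by
              rw [CliffordAlgebra.reverse.map_mul]
        _ = φ (CliffordAlgebra.reverse (CliffordAlgebra.involute b))
              * φ (CliffordAlgebra.reverse (CliffordAlgebra.involute a)) := map_mul φ _ _
        _ = bar (φ b) * bar (φ a) := by rw [ha, hb]
        _ = bar (φ a * φ b) := (hmul _ _).symm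
        _ = bar (φ (a*b)) := by rw [map_mul φ a b]
    | add a b ha hb => simp only [map_add, ha, hb]
  refine ⟨Q, hndQ, AlgEquiv.ofBijective φ ⟨hinjφ, hsurjφ⟩, ?_⟩
  intro z
  exact hconj z
end
end
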